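/- For integers 0 ≤ c ≤ n, let M be the (n−c+1)×(n−c+1) integer matrix with entries M_{i,j} = (−1)^j · C(n−j, i+c−j) for i,j ∈ {0,…,n−c}, where the binomial coefficient C(a,b) is 0 whenever b < 0 or b > a. Then det(M) ∈ {−1, 1}; in particular, for every prime p the matrix M is invertible over the field F_p. -/

import Mathlib

/-!
Statement 5: For `0 ≤ c ≤ n`, the `(n−c+1)×(n−c+1)` integer matrix `M` with
`M_{i,j} = (−1)^j · C(n−j, i+c−j)` (with `C(a,b) = 0` for `b < 0` or `b > a`) has
determinant `±1`; in particular it is invertible over `F_p = ZMod p` for every prime `p`.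
-/

open Matrix

lemma detA : ∀ (m c : ℕ),
    (Matrix.of fun i j : Fin (m + 1) => ((c + (j : ℕ)).choose (i : ℕ) : ℤ)).det = 1 := by
  intro m
  induction m with
  | zero =>
    intro c
    rw [Matrix.det_fin_one]
    simp
  | succ m ih =>
    intro c
    set B : Matrix (Fin (m + 2)) (Fin (m + 2)) ℤ := Matrix.of fun i j =>
      if (j : ℕ) = 0 then (c.choose (i : ℕ) : ℤ)
      else if (i : ℕ) = 0 then 0
      else ((c + (j : ℕ) - 1).choose ((i : ℕ) - 1) : ℤ) with hB
    have h1 : (Matrix.of fun i j : Fin (m + 2) => ((c + (j : ℕ)).choose (i : ℕ) : ℤ)).det = B.det := by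
      apply Matrix.det_eq_of_forall_col_eq_smul_add_pred (fun _ => 1)
      · intro i
        simp [hB]
      · intro i j
        simp only [hB, Matrix.of_apply, Fin.val_succ, Fin.coe_castSucc, one_mul]
        rw [if_neg (by omega)]
        rcases Nat.eq_zero_or_pos (i : ℕ) with hi | hi
        · simp [hi]
        · rw [if_neg (by omega)]
          obtain ⟨k, hk⟩ := Nat.exists_eq_add_of_le hi
          have : (i : ℕ) = k + 1 := by omega
          rw [this]
          have : c + ((j : ℕ) + 1) = (c + (j:ℕ)) + 1 := by ring
          rw [this, Nat.choose_succ_succ]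
          push_cast
          rfl
    rw [h1, Matrix.det_succ_row_zero]
    have hzero : ∀ j : Fin (m + 2), j ≠ 0 → (-1 : ℤ) ^ (j : ℕ) * B 0 j *
        (B.submatrix Fin.succ j.succAbove).det = 0 := by
      intro j hj
      have : B 0 j = 0 := by
        simp only [hB, Matrix.of_apply]
        rw [if_neg (Fin.val_ne_zero_iff.mpr hj)]
        simp
      simp [this]
    rw [Finset.sum_eq_single 0]
    · have h0 : B 0 0 = 1 := by simp [hB]
      have hsub : B.submatrix Fin.succ (Fin.succAbove 0) =
          Matrix.of fun i j : Fin (m + 1) => ((c + (j : ℕ)).choose (i : ℕ) : ℤ) := by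
        ext i j
        simp only [Matrix.submatrix_apply, hB, Matrix.of_apply]
        rw [Fin.succAbove_zero]
        rw [if_neg (by simp), if_neg (by simp)]
        simp only [Fin.val_succ]
        have e1 : c + ((j : ℕ) + 1) - 1 = c + (j : ℕ) := by omega
        have e2 : (i : ℕ) + 1 - 1 = (i : ℕ) := by omega
        rw [e1, e2]
      rw [h0, hsub, ih c]
      simp
    · intro j _ hj
      exact hzero j hj
    · intro h
      exact absurd (Finset.mem_univ 0) h

theorem stmt_5 (n c : ℕ) (hc : c ≤ n)
    (M : Matrix (Fin (n - c + 1)) (Fin (n - c + 1)) ℤ)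
    (hM : ∀ i j : Fin (n - c + 1),
      M i j = if (j : ℕ) ≤ (i : ℕ) + c
        then (-1 : ℤ) ^ (j : ℕ) * ((n - (j : ℕ)).choose ((i : ℕ) + c - (j : ℕ)) : ℤ)
        else 0) :
    (M.det = 1 ∨ M.det = -1) ∧
      ∀ p : ℕ, p.Prime → IsUnit (M.map (fun x : ℤ => (x : ZMod p))).det := by
  have hnm : n = c + (n - c) := by omega
  have hMrev : M.submatrix ⇑(Fin.revPerm) ⇑(Fin.revPerm) =
      Matrix.of (fun i j : Fin (n - c + 1) =>
        ((-1 : ℤ) ^ (n - c - (j : ℕ))) *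
          (Matrix.of fun i j : Fin (n - c + 1) => ((c + (j : ℕ)).choose (i : ℕ) : ℤ)) i j) := by
    ext i j
    simp only [Matrix.submatrix_apply, Fin.revPerm_apply, Matrix.of_apply]
    rw [hM]
    have hi : (i.rev : ℕ) = n - c - (i : ℕ) := by rw [Fin.val_rev]; omega
    have hj : (j.rev : ℕ) = n - c - (j : ℕ) := by rw [Fin.val_rev]; omega
    rw [hi, hj]
    have hi' : (i : ℕ) ≤ n - c := by omega
    have hj' : (j : ℕ) ≤ n - c := by omega
    by_cases h : n - c - (j : ℕ) ≤ n - c - (i : ℕ) + c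
    · rw [if_pos h]
      have h1 : n - (n - c - (j : ℕ)) = c + (j : ℕ) := by omega
      have h2 : n - c - (i : ℕ) + c - (n - c - (j : ℕ)) = c + (j : ℕ) - (i : ℕ) := by omega
      have h3 : (i : ℕ) ≤ c + (j : ℕ) := by omega
      rw [h1, h2, Nat.choose_symm h3]
    · rw [if_neg h]
      have h3 : c + (j : ℕ) < (i : ℕ) := by omega
      rw [Nat.choose_eq_zero_of_lt h3]
      simp
  have hdet : M.det = (∏ j : Fin (n - c + 1), (-1 : ℤ) ^ (n - c - (j : ℕ))) := by
    rw [← Matrix.det_submatrix_equiv_self Fin.revPerm M, hMrev, Matrix.det_mul_row,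
      detA (n - c) c, mul_one]
  have hunit : IsUnit M.det := by
    rw [hdet, Finset.prod_pow_eq_pow_sum]
    exact (isUnit_one.neg).pow _
  refine ⟨Int.isUnit_iff.mp hunit, fun p hp => ?_⟩
  have hmap : (M.map (fun x : ℤ => (x : ZMod p))).det = ((M.det : ℤ) : ZMod p) := by
    have : M.map (fun x : ℤ => (x : ZMod p)) = (Int.castRingHom (ZMod p)).mapMatrix M := rfl
    rw [this, ← RingHom.map_det]
    rfl
  rw [hmap]
  rcases Int.isUnit_iff.mp hunit with h | h <;> rw [h] <;> simp
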